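/- The mutual information region 𝓘_{XY} is a compact subset of ℝ³. -/
import Mathlib


open scoped BigOperators Pointwise Classical

noncomputable section

set_option linter.unusedSectionVars false
set_option maxHeartbeats 1000000

namespace GW

/-- A probability mass function on a finite type. -/
def IsPMF {α : Type} [Fintype α] (p : α → ℝ) : Prop :=
  (∀ a, 0 ≤ p a) ∧ ∑ a, p a = 1

/-- Distribution (pmf) of the random variable `f` under the pmf `p`. -/
def dist {α β : Type} [Fintype α] (p : α → ℝ) (f : α → β) : β → ℝ :=
  fun b => ∑ a, if f a = b then p a else 0

/-- Shannon entropy (base 2) of the random variable `f` under the pmf `p`. -/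
def H {α β : Type} [Fintype α] [Fintype β] (p : α → ℝ) (f : α → β) : ℝ :=
  ∑ b, -(dist p f b * Real.logb 2 (dist p f b))

/-- Mutual information `I(f; g)` under `p`. -/
def I2 {α β γ : Type} [Fintype α] [Fintype β] [Fintype γ]
    (p : α → ℝ) (f : α → β) (g : α → γ) : ℝ :=
  H p f + H p g - H p (fun a => (f a, g a))

/-- Conditional entropy `H(f | g)` under `p`. -/
def Hc {α β γ : Type} [Fintype α] [Fintype β] [Fintype γ]
    (p : α → ℝ) (f : α → β) (g : α → γ) : ℝ :=
  H p (fun a => (f a, g a)) - H p g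

/-- Conditional mutual information `I(f; g | h)` under `p`. -/
def Ic {α β γ δ : Type} [Fintype α] [Fintype β] [Fintype γ] [Fintype δ]
    (p : α → ℝ) (f : α → β) (g : α → γ) (h : α → δ) : ℝ :=
  Hc p f h + Hc p g h - Hc p (fun a => (f a, g a)) h

/-- Independence of the random variables `f` and `g` under `p`. -/
def Indep {α β γ : Type} [Fintype α] (p : α → ℝ) (f : α → β) (g : α → γ) : Prop :=
  ∀ b c, dist p (fun a => (f a, g a)) (b, c) = dist p f b * dist p g c

/-- `q` is a joint pmf on `X × Y × U` whose `(X,Y)`-marginal is `p`; i.e. `U` is an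
auxiliary random variable defined jointly with `(X,Y)` via a conditional pmf `p_{U|XY}`. -/
def IsAux {X Y U : Type} [Fintype X] [Fintype Y] [Fintype U]
    (p : X × Y → ℝ) (q : X × Y × U → ℝ) : Prop :=
  IsPMF q ∧ ∀ x y, (∑ u, q (x, y, u)) = p (x, y)

/-- Coordinate map onto `X`. -/
def cX {X Y U : Type} : X × Y × U → X := fun a => a.1
/-- Coordinate map onto `Y`. -/
def cY {X Y U : Type} : X × Y × U → Y := fun a => a.2.1
/-- Coordinate map onto `U`. -/
def cU {X Y U : Type} : X × Y × U → U := fun a => a.2.2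
/-- Coordinate map onto `X × Y`. -/
def cXY {X Y U : Type} : X × Y × U → X × Y := fun a => (a.1, a.2.1)

/-- The mutual information region `𝓘_{XY}`. -/
def MIRegion {X Y : Type} [Fintype X] [Fintype Y] (p : X × Y → ℝ) : Set (ℝ × ℝ × ℝ) :=
  { v | ∃ (U : Type) (_ : Fintype U) (q : X × Y × U → ℝ), IsAux p q ∧
      v = (I2 q cX cU, I2 q cY cU, I2 q cXY cU) }

/-- The outer region `𝓘ᵒ_{XY}`. -/
def OuterRegion {X Y : Type} [Fintype X] [Fintype Y] (p : X × Y → ℝ) : Set (ℝ × ℝ × ℝ) :=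
  { v | 0 ≤ v.1 ∧ 0 ≤ v.2.1 ∧ v.1 + v.2.1 - v.2.2 ≤ I2 p Prod.fst Prod.snd ∧
        0 ≤ v.2.2 - v.2.1 ∧ v.2.2 - v.2.1 ≤ Hc p Prod.fst Prod.snd ∧
        0 ≤ v.2.2 - v.1 ∧ v.2.2 - v.1 ≤ Hc p Prod.snd Prod.fst }

/-- Maximal interaction information `G_NNI(X; Y)`. -/
def GNNI {X Y : Type} [Fintype X] [Fintype Y] (p : X × Y → ℝ) : ℝ :=
  sSup { r | ∃ (U : Type) (_ : Fintype U) (q : X × Y × U → ℝ), IsAux p q ∧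
      r = Ic q cX cY cU - I2 p Prod.fst Prod.snd }

/-- Asymmetric private interaction information `G_PNI(X → Y)`. -/
def GPNI {X Y : Type} [Fintype X] [Fintype Y] (p : X × Y → ℝ) : ℝ :=
  sSup { r | ∃ (U : Type) (_ : Fintype U) (q : X × Y × U → ℝ), IsAux p q ∧
      Indep q cU cX ∧ r = Ic q cX cY cU - I2 p Prod.fst Prod.snd }

/-- Symmetric private interaction information `G_PPI(X; Y)`. -/
def GPPI {X Y : Type} [Fintype X] [Fintype Y] (p : X × Y → ℝ) : ℝ :=
  sSup { r | ∃ (U : Type) (_ : Fintype U) (q : X × Y × U → ℝ), IsAux p q ∧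
      Indep q cU cX ∧ Indep q cU cY ∧ r = Ic q cX cY cU - I2 p Prod.fst Prod.snd }


-- helper lemmas

lemma neg_mul_logb (a b : ℝ) (ha : 0 ≤ a) (hb : 0 ≤ b) :
    -(a * b * Real.logb 2 (a * b)) = -(a * b * Real.logb 2 a) + -(a * b * Real.logb 2 b) := by
  rcases eq_or_lt_of_le ha with h | h
  · simp [← h]
  rcases eq_or_lt_of_le hb with h' | h'
  · simp [← h']
  rw [Real.logb_mul h.ne' h'.ne']; ring

lemma dist_nonneg' {α β : Type} [Fintype α] (p : α → ℝ) (hp : ∀ a, 0 ≤ p a) (f : α → β)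
    (b : β) : 0 ≤ dist p f b := by
  refine Finset.sum_nonneg fun a _ => ?_
  by_cases h : f a = b <;> simp [h, hp a]

lemma sum_dist {α β : Type} [Fintype α] [Fintype β] (p : α → ℝ) (f : α → β) :
    ∑ b, dist p f b = ∑ a, p a := by
  unfold dist
  rw [Finset.sum_comm]
  simp

section LemA

variable {X Y U Z : Type} [Fintype X] [Fintype Y] [Fintype U] [Fintype Z]
variable (w : U → ℝ) (r : U → (X × Y → ℝ)) (q : X × Y × U → ℝ)

lemma lemA_d1 (hq : ∀ a, q a = w a.2.2 * r a.2.2 (a.1, a.2.1)) (g : X × Y → Z) (z : Z) :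
    dist q (fun a => g (cXY a)) z = dist (fun xy => ∑ u, w u * r u xy) g z := by
  unfold dist cXY
  simp only [Fintype.sum_prod_type]
  refine Finset.sum_congr rfl fun x _ => Finset.sum_congr rfl fun y _ => ?_
  by_cases h : g (x, y) = z <;> simp [h, hq]

lemma lemA_d2 (hr : ∀ u, IsPMF (r u)) (hq : ∀ a, q a = w a.2.2 * r a.2.2 (a.1, a.2.1))
    (u₀ : U) : dist q (cU : X × Y × U → U) u₀ = w u₀ := by
  unfold dist cU
  simp only [Fintype.sum_prod_type]
  have hsum : ∑ x, ∑ y, r u₀ (x, y) = 1 := by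
    have := (hr u₀).2; rwa [Fintype.sum_prod_type] at this
  calc ∑ x, ∑ y, ∑ u, (if u = u₀ then q (x, y, u) else 0)
      = ∑ x, ∑ y, w u₀ * r u₀ (x, y) := by
        refine Finset.sum_congr rfl fun x _ => Finset.sum_congr rfl fun y _ => ?_
        simp [hq]
    _ = w u₀ := by
        simp only [← Finset.mul_sum]
        rw [hsum, mul_one]

lemma lemA_d3 (hq : ∀ a, q a = w a.2.2 * r a.2.2 (a.1, a.2.1)) (g : X × Y → Z) (z : Z)
    (u₀ : U) :
    dist q (fun a => (g (cXY a), cU a)) (z, u₀) = w u₀ * dist (r u₀) g z := by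
  unfold dist cXY cU
  simp only [Fintype.sum_prod_type, Finset.mul_sum]
  refine Finset.sum_congr rfl fun x _ => Finset.sum_congr rfl fun y _ => ?_
  by_cases h : g (x, y) = z <;> simp [h, hq, Prod.ext_iff, mul_comm, mul_left_comm]

lemma lemA_Hpair (hw : ∀ u, 0 ≤ w u) (hr : ∀ u, IsPMF (r u))
    (hq : ∀ a, q a = w a.2.2 * r a.2.2 (a.1, a.2.1)) (g : X × Y → Z) :
    H q (fun a => (g (cXY a), cU a)) = H q (cU : X × Y × U → U) + ∑ u, w u * H (r u) g := by
  have key : ∀ u, ∑ z, -(w u * dist (r u) g z * Real.logb 2 (w u * dist (r u) g z))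
      = -(w u * Real.logb 2 (w u)) + w u * H (r u) g := by
    intro u
    have hsplit : ∀ z, -(w u * dist (r u) g z * Real.logb 2 (w u * dist (r u) g z))
        = (-(w u * Real.logb 2 (w u))) * dist (r u) g z
          + w u * -(dist (r u) g z * Real.logb 2 (dist (r u) g z)) := by
      intro z
      rw [neg_mul_logb (w u) (dist (r u) g z) (hw u) (dist_nonneg' (r u) (hr u).1 g z)]
      ring
    simp only [hsplit, Finset.sum_add_distrib, ← Finset.mul_sum]
    rw [sum_dist, (hr u).2, mul_one]
    rfl
  have hU : H q (cU : X × Y × U → U) = ∑ u, -(w u * Real.logb 2 (w u)) := by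
    unfold H
    refine Finset.sum_congr rfl fun u _ => ?_
    rw [lemA_d2 w r q hr hq u]
  have hL : H q (fun a => (g (cXY a), cU a))
      = ∑ u, ∑ z, -(w u * dist (r u) g z * Real.logb 2 (w u * dist (r u) g z)) := by
    unfold H
    rw [Fintype.sum_prod_type, Finset.sum_comm]
    refine Finset.sum_congr rfl fun u _ => Finset.sum_congr rfl fun z _ => ?_
    rw [lemA_d3 w r q hq g z u]
  rw [hL, hU, ← Finset.sum_add_distrib]
  exact Finset.sum_congr rfl fun u _ => key u

lemma lemA (hw : ∀ u, 0 ≤ w u) (hr : ∀ u, IsPMF (r u))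
    (hq : ∀ a, q a = w a.2.2 * r a.2.2 (a.1, a.2.1)) (g : X × Y → Z) :
    I2 q (fun a => g (cXY a)) cU
      = H (fun xy => ∑ u, w u * r u xy) g - ∑ u, w u * H (r u) g := by
  have h1 : H q (fun a => g (cXY a)) = H (fun xy => ∑ u, w u * r u xy) g := by
    unfold H
    refine Finset.sum_congr rfl fun z _ => ?_
    rw [lemA_d1 w r q hq g z]
  rw [I2, lemA_Hpair w r q hw hr hq g, h1]
  ring

end LemA

section Cont

variable {α β γ : Type} [Fintype α] [Fintype β] [Fintype γ]

lemma continuous_H (f : α → β) : Continuous fun p : α → ℝ => H p f := by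
  unfold H
  refine continuous_finset_sum _ fun b _ => ?_
  have h1 : Continuous fun p : α → ℝ => dist p f b := by
    unfold dist
    refine continuous_finset_sum _ fun a _ => ?_
    by_cases h : f a = b
    · simpa [h] using continuous_apply a
    · simp only [h, if_false]; exact continuous_const
  have h2 : Continuous fun t : ℝ => -(t * Real.logb 2 t) := by
    have he : (fun t : ℝ => -(t * Real.logb 2 t)) = fun t => -(t * Real.log t / Real.log 2) := by
      funext t; rw [Real.logb]; ring
    rw [he]
    exact (Real.continuous_mul_log.div_const _).neg
  exact h2.comp h1

lemma continuous_I2 (f : α → β) (g : α → γ) : Continuous fun p : α → ℝ => I2 p f g := by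
  unfold I2
  exact ((continuous_H f).add (continuous_H g)).sub (continuous_H _)

end Cont

lemma sum_extend_mul {ι κ A : Type} [Fintype ι] [Fintype κ] (j : ι → κ)
    (hj : Function.Injective j) (c₀ : ι → ℝ) (s₀ : ι → A) (d : A) (ψ : A → ℝ) :
    ∑ k, Function.extend j c₀ 0 k * ψ (Function.extend j s₀ (fun _ => d) k)
      = ∑ i, c₀ i * ψ (s₀ i) := by
  rw [← Finset.sum_subset (Finset.subset_univ (Finset.univ.image j))
    (fun k _ hk => ?_)]
  · rw [Finset.sum_image (fun a _ b _ h => hj h)]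
    refine Finset.sum_congr rfl fun i _ => ?_
    rw [hj.extend_apply, hj.extend_apply]
  · have hk' : ¬∃ i, j i = k := by
      rintro ⟨i, rfl⟩; exact hk (Finset.mem_image_of_mem j (Finset.mem_univ i))
    rw [Function.extend_apply' _ _ _ hk']
    simp

lemma sum_prod3 {X Y U : Type} [Fintype X] [Fintype Y] [Fintype U] (f : X × Y × U → ℝ) :
    ∑ a, f a = ∑ u, ∑ xy : X × Y, f (xy.1, xy.2, u) := by
  have h1 : ∀ x : X, ∑ y : Y, ∑ u : U, f (x, y, u) = ∑ u, ∑ y, f (x, y, u) := fun x =>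
    Finset.sum_comm
  simp only [Fintype.sum_prod_type, h1]
  exact Finset.sum_comm


def NN (X Y : Type) [Fintype X] [Fintype Y] : ℕ :=
  Module.finrank ℝ ((X × Y → ℝ) × ℝ × ℝ × ℝ) + 1

lemma reduce {X Y : Type} [Fintype X] [Fintype Y] (p : X × Y → ℝ) (hp : IsPMF p)
    {U : Type} [Fintype U] (q : X × Y × U → ℝ) (hq : IsAux p q) :
    ∃ q' : X × Y × Fin (NN X Y) → ℝ, IsAux p q' ∧
      I2 q' cX cU = I2 q cX cU ∧ I2 q' cY cU = I2 q cY cU ∧ I2 q' cXY cU = I2 q cXY cU := by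
  classical
  obtain ⟨⟨hq0, hq1⟩, hmarg⟩ := hq
  set w : U → ℝ := fun u => ∑ xy : X × Y, q (xy.1, xy.2, u) with hw_def
  set r : U → (X × Y → ℝ) :=
    fun u => if w u = 0 then p else fun xy => q (xy.1, xy.2, u) / w u with hr_def
  have hw0 : ∀ u, 0 ≤ w u := fun u => Finset.sum_nonneg fun xy _ => hq0 _
  have hq_zero : ∀ u, w u = 0 → ∀ xy : X × Y, q (xy.1, xy.2, u) = 0 := by
    intro u hu xy
    exact (Finset.sum_eq_zero_iff_of_nonneg
      (fun xy _ => hq0 (xy.1, xy.2, u))).1 hu xy (Finset.mem_univ xy)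
  have hr : ∀ u, IsPMF (r u) := by
    intro u
    by_cases h : w u = 0
    · simpa [hr_def, h] using hp
    · constructor
      · intro xy
        simp only [hr_def, h, if_false]
        exact div_nonneg (hq0 _) (hw0 u)
      · simp only [hr_def, h, if_false]
        rw [← Finset.sum_div]
        exact div_self h
  have hqwr : ∀ a : X × Y × U, q a = w a.2.2 * r a.2.2 (a.1, a.2.1) := by
    rintro ⟨x, y, u⟩
    by_cases h : w u = 0
    · simp [hr_def, h, hq_zero u h (x, y)]
    · simp only [hr_def, h, if_false]
      field_simp
  have hmarg' : ∀ xy : X × Y, ∑ u, w u * r u xy = p xy := by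
    intro xy
    have h1 : ∑ u, w u * r u xy = ∑ u, q (xy.1, xy.2, u) :=
      Finset.sum_congr rfl fun u _ => by
        have := hqwr (xy.1, xy.2, u); simpa using this.symm
    rw [h1]
    have := hmarg xy.1 xy.2
    simpa using this
  have hwsum : ∑ u, w u = 1 := by rw [← hq1, sum_prod3]
  set Fm : (X × Y → ℝ) → ((X × Y → ℝ) × ℝ × ℝ × ℝ) :=
    fun ρ => (ρ, H ρ Prod.fst, H ρ Prod.snd, H ρ id) with hFm_def
  have hv : (∑ u, w u • Fm (r u)) ∈ convexHull ℝ (Fm '' {ρ | IsPMF ρ}) := by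
    rw [← Finset.centerMass_eq_of_sum_1 _ _ hwsum]
    exact Finset.centerMass_mem_convexHull _ (fun u _ => hw0 u)
      (by rw [hwsum]; exact one_pos) (fun u _ => Set.mem_image_of_mem _ (hr u))
  obtain ⟨ι, hι, z, ω, hzran, haff, hωpos, hωsum, hzsum⟩ :=
    eq_pos_convex_span_of_mem_convexHull hv
  have hcard : Fintype.card ι ≤ NN X Y := by
    have h1 := haff.card_le_finrank_succ
    have h2 : Module.finrank ℝ (vectorSpan ℝ (Set.range z)) ≤
        Module.finrank ℝ ((X × Y → ℝ) × ℝ × ℝ × ℝ) := Submodule.finrank_le _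
    exact h1.trans (Nat.add_le_add_right h2 1)
  obtain ⟨j⟩ := Function.Embedding.nonempty_of_card_le
    (by simpa using hcard : Fintype.card ι ≤ Fintype.card (Fin (NN X Y)))
  have hσ : ∀ i : ι, ∃ s, IsPMF s ∧ Fm s = z i := by
    intro i
    obtain ⟨s, hs, hfs⟩ := hzran (Set.mem_range_self i)
    exact ⟨s, hs, hfs⟩
  choose σ hσ1 hσ2 using hσ
  have hzsum' : ∑ i, ω i • Fm (σ i) = ∑ u, w u • Fm (r u) := by
    simp only [hσ2]; exact hzsum
  have hcomp1 : ∀ xy, ∑ i, ω i * σ i xy = ∑ u, w u * r u xy := by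
    intro xy
    have h := congrArg (fun e : ((X × Y → ℝ) × ℝ × ℝ × ℝ) => e.1 xy) hzsum'
    simpa [hFm_def, Prod.fst_sum, Prod.smul_fst, Finset.sum_apply, Pi.smul_apply,
      smul_eq_mul] using h
  have hcomp2 : ∑ i, ω i * H (σ i) Prod.fst = ∑ u, w u * H (r u) Prod.fst := by
    have h := congrArg (fun e : ((X × Y → ℝ) × ℝ × ℝ × ℝ) => e.2.1) hzsum'
    simpa [hFm_def, Prod.fst_sum, Prod.snd_sum, Prod.smul_fst, Prod.smul_snd,
      smul_eq_mul] using h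
  have hcomp3 : ∑ i, ω i * H (σ i) Prod.snd = ∑ u, w u * H (r u) Prod.snd := by
    have h := congrArg (fun e : ((X × Y → ℝ) × ℝ × ℝ × ℝ) => e.2.2.1) hzsum'
    simpa [hFm_def, Prod.fst_sum, Prod.snd_sum, Prod.smul_fst, Prod.smul_snd,
      smul_eq_mul] using h
  have hcomp4 : ∑ i, ω i * H (σ i) id = ∑ u, w u * H (r u) id := by
    have h := congrArg (fun e : ((X × Y → ℝ) × ℝ × ℝ × ℝ) => e.2.2.2) hzsum'
    simpa [hFm_def, Prod.fst_sum, Prod.snd_sum, Prod.smul_fst, Prod.smul_snd,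
      smul_eq_mul] using h
  set c : Fin (NN X Y) → ℝ := Function.extend j ω 0 with hc_def
  set s : Fin (NN X Y) → (X × Y → ℝ) := Function.extend j σ (fun _ => p) with hs_def
  have hsum_ext : ∀ ψ : (X × Y → ℝ) → ℝ, ∑ k, c k * ψ (s k) = ∑ i, ω i * ψ (σ i) :=
    fun ψ => sum_extend_mul j j.injective ω σ p ψ
  have hcs : ∀ k, 0 ≤ c k ∧ IsPMF (s k) := by
    intro k
    by_cases h : ∃ i, j i = k
    · obtain ⟨i, rfl⟩ := h
      rw [hc_def, hs_def, j.injective.extend_apply, j.injective.extend_apply]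
      exact ⟨(hωpos i).le, hσ1 i⟩
    · rw [hc_def, hs_def, Function.extend_apply' _ _ _ h, Function.extend_apply' _ _ _ h]
      exact ⟨le_refl 0, hp⟩
  set q' : X × Y × Fin (NN X Y) → ℝ := fun a => c a.2.2 * s a.2.2 (a.1, a.2.1) with hq'_def
  have hmargq' : ∀ xy : X × Y, ∑ k, c k * s k xy = p xy := by
    intro xy
    rw [hsum_ext (fun ρ => ρ xy), hcomp1 xy, hmarg' xy]
  have hAux : IsAux p q' := by
    refine ⟨⟨fun a => mul_nonneg (hcs a.2.2).1 ((hcs a.2.2).2.1 _), ?_⟩, ?_⟩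
    · rw [sum_prod3]
      have hin : ∀ k, ∑ xy : X × Y, q' (xy.1, xy.2, k) = c k := by
        intro k
        have : ∀ xy : X × Y, q' (xy.1, xy.2, k) = c k * s k xy := by
          intro xy; simp [hq'_def]
        simp only [this]
        rw [← Finset.mul_sum, (hcs k).2.2, mul_one]
      rw [Finset.sum_congr rfl fun k _ => hin k]
      have := hsum_ext (fun _ => 1)
      simpa [hωsum] using this
    · intro x y
      exact hmargq' (x, y)
  have hmargfun : (fun xy => ∑ k, c k * s k xy) = p := funext hmargq'
  have hmargfun' : (fun xy => ∑ u, w u * r u xy) = p := funext hmarg'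
  have main : ∀ {Z : Type} [Fintype Z] (g : X × Y → Z),
      (∑ i, ω i * H (σ i) g = ∑ u, w u * H (r u) g) →
      I2 q' (fun a => g (cXY a)) cU = I2 q (fun a => g (cXY a)) cU := by
    intro Z _ g hg
    have hA := lemA c s q' (fun k => (hcs k).1) (fun k => (hcs k).2) (fun a => rfl) g
    have hB := lemA w r q hw0 hr hqwr g
    rw [hA, hB, hmargfun, hmargfun', hsum_ext (fun ρ => H ρ g), hg]
  exact ⟨q', hAux, main Prod.fst hcomp2, main Prod.snd hcomp3, main id hcomp4⟩

/-- the mutual information region `𝓘_{XY}` is a compact subset of `ℝ³`. -/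
theorem stmt2 {X Y : Type} [Fintype X] [Fintype Y] (p : X × Y → ℝ) (hp : IsPMF p) :
    IsCompact (MIRegion p) := by
  classical
  set N := NN X Y with hN_def
  set K : Set (X × Y × Fin N → ℝ) := {q | IsAux p q} with hK_def
  set G : (X × Y × Fin N → ℝ) → ℝ × ℝ × ℝ :=
    fun q => (I2 q cX cU, I2 q cY cU, I2 q cXY cU) with hG_def
  have hKc : IsCompact K := by
    have hclosed : IsClosed K := by
      have h1 : IsClosed {q : X × Y × Fin N → ℝ | ∀ a, 0 ≤ q a} := by
        rw [Set.setOf_forall]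
        exact isClosed_iInter fun a => isClosed_le continuous_const (continuous_apply a)
      have h2 : IsClosed {q : X × Y × Fin N → ℝ | ∑ a, q a = 1} :=
        isClosed_eq (continuous_finset_sum _ fun a _ => continuous_apply a) continuous_const
      have h3 : IsClosed {q : X × Y × Fin N → ℝ | ∀ x y, (∑ u, q (x, y, u)) = p (x, y)} := by
        rw [Set.setOf_forall]
        refine isClosed_iInter fun x => ?_
        rw [Set.setOf_forall]
        exact isClosed_iInter fun y =>
          isClosed_eq (continuous_finset_sum _ fun u _ => continuous_apply _) continuous_const
      have hKeq : K = ({q : X × Y × Fin N → ℝ | ∀ a, 0 ≤ q a} ∩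
          {q | ∑ a, q a = 1}) ∩ {q | ∀ x y, (∑ u, q (x, y, u)) = p (x, y)} := by
        ext q'
        simp only [hK_def, Set.mem_setOf_eq, Set.mem_inter_iff, IsAux, IsPMF, and_assoc]
      rw [hKeq]
      exact (h1.inter h2).inter h3
    refine IsCompact.of_isClosed_subset (isCompact_Icc (a := (0 : X × Y × Fin N → ℝ)) (b := 1)) hclosed ?_
    intro q hq
    constructor
    · intro a; exact hq.1.1 a
    · intro a
      calc q a ≤ ∑ b, q b :=
            Finset.single_le_sum (fun b _ => hq.1.1 b) (Finset.mem_univ a)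
        _ = 1 := hq.1.2
  have hGc : Continuous G :=
    (continuous_I2 cX cU).prodMk ((continuous_I2 cY cU).prodMk (continuous_I2 cXY cU))
  have hEq : MIRegion p = G '' K := by
    ext v
    constructor
    · rintro ⟨U, hU, q, hq, rfl⟩
      obtain ⟨q', hq', h1, h2, h3⟩ := reduce p hp q hq
      exact ⟨q', hq', by rw [hG_def]; simp [h1, h2, h3]⟩
    · rintro ⟨q, hq, rfl⟩
      exact ⟨Fin N, inferInstance, q, hq, rfl⟩
  rw [hEq]
  exact hKc.image hGc


end GW
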